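/- (Shift property.) Under the hypotheses of the Sewing Lemma, fix τ ∈ [0,T] and define the shifted approximation term θ_τΞ : Δ_{T−τ} → W by (θ_τΞ)_{vu} := Ξ_{v+τ, u+τ}. Then θ_τΞ again satisfies the hypotheses of the Sewing Lemma on [0, T−τ] (with the same constants), and for all τ ≤ s ≤ t ≤ T one has (δ̂IΞ)_{ts} = (δ̂I(θ_τΞ))_{t−τ, s−τ}, where I(θ_τΞ) is the sewing map of θ_τΞ on [0,T−τ]. -/

import Mathlib

open Filter Topology

/-- Uniqueness-type telescoping estimate: if `E` vanishes at `a` and its twisted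
increments on `[a,t]` are bounded by `M * (v-m)^ρ` with `ρ > 1`, then `E t = 0`. -/
private lemma sewing_unique_aux
    {W : Type*} [NormedAddCommGroup W] [NormedSpace ℝ W]
    (T : ℝ) (S : ℝ → W →L[ℝ] W)
    (hS0 : S 0 = ContinuousLinearMap.id ℝ W)
    (hSadd : ∀ t s : ℝ, 0 ≤ t → 0 ≤ s → S (t + s) = (S t).comp (S s))
    (cS : ℝ) (hcS0 : 0 ≤ cS) (hScS : ∀ u : ℝ, 0 ≤ u → u ≤ T → ‖S u‖ ≤ cS)
    (ρ : ℝ) (hρ : 1 < ρ)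
    (E : ℝ → W) (a t : ℝ) (ha : 0 ≤ a) (hat : a ≤ t) (htT : t ≤ T)
    (hEa : E a = 0) (M : ℝ) (hM : 0 ≤ M)
    (hE : ∀ m v : ℝ, a ≤ m → m ≤ v → v ≤ t → ‖E v - S (v - m) (E m)‖ ≤ M * (v - m) ^ ρ) :
    E t = 0 := by
  have key : ∀ n : ℕ, 0 < n →
      ‖E t‖ ≤ cS * M * (t - a) ^ ρ * ((n : ℝ) * ((n : ℝ) ^ ρ)⁻¹) := by
    intro n hn
    have hnR : (0:ℝ) < n := Nat.cast_pos.mpr hn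
    set h : ℝ := (t - a) / n with hh_def
    have hh0 : 0 ≤ h := div_nonneg (by linarith) hnR.le
    have hnh : (n : ℝ) * h = t - a := by rw [hh_def]; field_simp [hnR.ne']
    have step : ∀ k : ℕ, k ≤ n →
        ‖E t - S ((k : ℝ) * h) (E (t - (k : ℝ) * h))‖ ≤ (k : ℝ) * (cS * (M * h ^ ρ)) := by
      intro k
      induction k with
      | zero => intro _; simp [hS0]
      | succ k ih =>
        intro hk1
        have hk : k ≤ n := Nat.le_of_succ_le hk1
        have ihk := ih hk
        have hkh0 : (0:ℝ) ≤ (k : ℝ) * h := by positivity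
        have hknh : (k : ℝ) * h ≤ (n : ℝ) * h :=
          mul_le_mul_of_nonneg_right (by exact_mod_cast hk) hh0
        have hk1nh : ((k : ℝ) + 1) * h ≤ (n : ℝ) * h :=
          mul_le_mul_of_nonneg_right (by exact_mod_cast hk1) hh0
        have hkhT : (k : ℝ) * h ≤ T := by rw [hnh] at hknh; linarith
        have hm_a : a ≤ t - ((k : ℝ) + 1) * h := by rw [hnh] at hk1nh; linarith
        have hco : S (((k : ℝ) + 1) * h) = (S ((k : ℝ) * h)).comp (S h) := by
          rw [show ((k : ℝ) + 1) * h = (k : ℝ) * h + h by ring]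
          exact hSadd _ _ hkh0 hh0
        have split : E t - S (((k : ℝ) + 1) * h) (E (t - ((k : ℝ) + 1) * h))
            = (E t - S ((k : ℝ) * h) (E (t - (k : ℝ) * h)))
              + S ((k : ℝ) * h)
                  (E (t - (k : ℝ) * h) - S h (E (t - ((k : ℝ) + 1) * h))) := by
          rw [hco]
          simp only [ContinuousLinearMap.coe_comp', Function.comp_apply, map_sub]
          abel
        have hEstep : ‖E (t - (k : ℝ) * h) - S h (E (t - ((k : ℝ) + 1) * h))‖
            ≤ M * h ^ ρ := by
          have := hE (t - ((k : ℝ) + 1) * h) (t - (k : ℝ) * h) hm_a (by nlinarith)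
            (by nlinarith)
          rw [show t - (k : ℝ) * h - (t - ((k : ℝ) + 1) * h) = h by ring] at this
          exact this
        have hSb : ‖S ((k : ℝ) * h)
            (E (t - (k : ℝ) * h) - S h (E (t - ((k : ℝ) + 1) * h)))‖
            ≤ cS * (M * h ^ ρ) := by
          calc ‖S ((k : ℝ) * h) (E (t - (k : ℝ) * h) - S h (E (t - ((k : ℝ) + 1) * h)))‖
              ≤ ‖S ((k : ℝ) * h)‖ * ‖E (t - (k : ℝ) * h) - S h (E (t - ((k : ℝ) + 1) * h))‖ :=
                (S ((k : ℝ) * h)).le_opNorm _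
            _ ≤ cS * (M * h ^ ρ) := by
                apply mul_le_mul (hScS _ hkh0 hkhT) hEstep (norm_nonneg _) hcS0
        push_cast
        calc ‖E t - S (((k : ℝ) + 1) * h) (E (t - ((k : ℝ) + 1) * h))‖
            ≤ ‖E t - S ((k : ℝ) * h) (E (t - (k : ℝ) * h))‖
              + ‖S ((k : ℝ) * h) (E (t - (k : ℝ) * h) - S h (E (t - ((k : ℝ) + 1) * h)))‖ := by
                rw [split]; exact norm_add_le _ _
          _ ≤ (k : ℝ) * (cS * (M * h ^ ρ)) + cS * (M * h ^ ρ) := add_le_add ihk hSb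
          _ = ((k : ℝ) + 1) * (cS * (M * h ^ ρ)) := by ring
    have hna : t - (n : ℝ) * h = a := by rw [hnh]; ring
    have := step n le_rfl
    rw [hna, hEa, map_zero, sub_zero] at this
    have hhr : h ^ ρ = (t - a) ^ ρ * ((n : ℝ) ^ ρ)⁻¹ := by
      rw [hh_def, Real.div_rpow (by linarith) hnR.le]
      ring
    calc ‖E t‖ ≤ (n : ℝ) * (cS * (M * h ^ ρ)) := this
      _ = cS * M * (t - a) ^ ρ * ((n : ℝ) * ((n : ℝ) ^ ρ)⁻¹) := by rw [hhr]; ring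
  have hlim : Tendsto (fun n : ℕ => cS * M * (t - a) ^ ρ * ((n : ℝ) * ((n : ℝ) ^ ρ)⁻¹))
      atTop (𝓝 0) := by
    have h1 : Tendsto (fun x : ℝ => x ^ (1 - ρ)) atTop (𝓝 0) := by
      have := tendsto_rpow_neg_atTop (y := ρ - 1) (by linarith)
      simpa [neg_sub] using this
    have h2 : Tendsto (fun n : ℕ => ((n : ℝ)) ^ (1 - ρ)) atTop (𝓝 0) :=
      h1.comp tendsto_natCast_atTop_atTop
    have h3 : Tendsto (fun n : ℕ => cS * M * (t - a) ^ ρ * ((n : ℝ) ^ (1 - ρ))) atTop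
        (𝓝 (cS * M * (t - a) ^ ρ * 0)) := h2.const_mul _
    rw [mul_zero] at h3
    apply h3.congr'
    filter_upwards [eventually_gt_atTop 0] with n hn
    have hnR : (0:ℝ) < n := Nat.cast_pos.mpr hn
    rw [Real.rpow_sub hnR, Real.rpow_one]
    ring
  have : ‖E t‖ ≤ 0 := by
    apply ge_of_tendsto hlim
    filter_upwards [eventually_gt_atTop 0] with n hn
    exact key n hn
  exact norm_le_zero_iff.mp this

/-- Shift property of the sewing map. -/
theorem sewing_map_shift_property
    {W : Type*} [NormedAddCommGroup W] [NormedSpace ℝ W] [CompleteSpace W]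
    (T : ℝ) (hT : 0 < T)
    (S : ℝ → W →L[ℝ] W)
    (hS0 : S 0 = ContinuousLinearMap.id ℝ W)
    (hSadd : ∀ t s : ℝ, 0 ≤ t → 0 ≤ s → S (t + s) = (S t).comp (S s))
    (cS : ℝ) (hScS : ∀ t : ℝ, 0 ≤ t → t ≤ T → ‖S t‖ ≤ cS)
    (Ξ : ℝ → ℝ → W)
    (hΞcont : ContinuousOn (fun p : ℝ × ℝ => Ξ p.1 p.2)
      {p : ℝ × ℝ | 0 ≤ p.2 ∧ p.2 ≤ p.1 ∧ p.1 ≤ T})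
    (c₁ c₂ α β ρ : ℝ) (hc₁ : 0 ≤ c₁) (hc₂ : 0 ≤ c₂)
    (hα0 : 0 ≤ α) (hα1 : α ≤ 1) (hβ0 : 0 ≤ β) (hβ1 : β ≤ 1) (hρ : 1 < ρ)
    (hαβρ : α + β ≤ ρ)
    (hΞ1 : ∀ u v : ℝ, 0 ≤ u → u ≤ v → v ≤ T → ‖Ξ v u‖ ≤ c₁ * (v - u) ^ α)
    (hΞ2 : ∀ u m v : ℝ, 0 < u → u ≤ m → m ≤ v → v ≤ T →
      ‖Ξ v u - Ξ v m - S (v - m) (Ξ m u)‖ ≤ c₂ * u ^ (-β) * (v - u) ^ ρ)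
    (τ : ℝ) (hτ0 : 0 ≤ τ) (hτT : τ ≤ T)
    -- `I` is the sewing map of `Ξ` on `[0,T]`:
    (I : ℝ → W) (hIcont : ContinuousOn I (Set.Icc 0 T)) (hI0 : I 0 = 0)
    (CI : ℝ)
    (hIbd1 : ∀ s t : ℝ, 0 ≤ s → s ≤ t → t ≤ T →
      ‖I t - S (t - s) (I s)‖ ≤ CI * (c₁ + c₂) * (t - s) ^ α)
    (hIbd2 : ∀ s t : ℝ, 0 < s → s ≤ t → t ≤ T →
      ‖I t - S (t - s) (I s) - Ξ t s‖ ≤ CI * c₂ * s ^ (-β) * (t - s) ^ ρ)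
    -- `Iθ` is the sewing map of the shifted term `θ_τΞ` on `[0, T-τ]`:
    (Iθ : ℝ → W) (hIθcont : ContinuousOn Iθ (Set.Icc 0 (T - τ))) (hIθ0 : Iθ 0 = 0)
    (CIθ : ℝ)
    (hIθbd1 : ∀ s t : ℝ, 0 ≤ s → s ≤ t → t ≤ T - τ →
      ‖Iθ t - S (t - s) (Iθ s)‖ ≤ CIθ * (c₁ + c₂) * (t - s) ^ α)
    (hIθbd2 : ∀ s t : ℝ, 0 < s → s ≤ t → t ≤ T - τ →
      ‖Iθ t - S (t - s) (Iθ s) - Ξ (t + τ) (s + τ)‖ ≤ CIθ * c₂ * s ^ (-β) * (t - s) ^ ρ) :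
    -- the shifted term satisfies the Sewing Lemma hypotheses on `[0, T-τ]` with the same constants:
    (∀ u v : ℝ, 0 ≤ u → u ≤ v → v ≤ T - τ →
      ‖Ξ (v + τ) (u + τ)‖ ≤ c₁ * (v - u) ^ α) ∧
    (∀ u m v : ℝ, 0 < u → u ≤ m → m ≤ v → v ≤ T - τ →
      ‖Ξ (v + τ) (u + τ) - Ξ (v + τ) (m + τ) - S (v - m) (Ξ (m + τ) (u + τ))‖ ≤
        c₂ * u ^ (-β) * (v - u) ^ ρ) ∧
    -- and the shift identity holds:
    (∀ s t : ℝ, τ ≤ s → s ≤ t → t ≤ T →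
      I t - S (t - s) (I s) = Iθ (t - τ) - S (t - s) (Iθ (s - τ))) := by
  set cS' : ℝ := max cS 1 with hcS'_def
  have hcS'0 : 0 ≤ cS' := le_trans zero_le_one (le_max_right _ _)
  have hS' : ∀ u : ℝ, 0 ≤ u → u ≤ T → ‖S u‖ ≤ cS' := fun u h1 h2 =>
    (hScS u h1 h2).trans (le_max_left _ _)
  refine ⟨?_, ?_, ?_⟩
  · intro u v hu huv hvT
    have h := hΞ1 (u + τ) (v + τ) (by linarith) (by linarith) (by linarith)
    rwa [show v + τ - (u + τ) = v - u by ring] at h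
  · intro u m v hu hum hmv hvT
    have h := hΞ2 (u + τ) (m + τ) (v + τ) (by linarith) (by linarith) (by linarith)
      (by linarith)
    rw [show v + τ - (m + τ) = v - m by ring, show v + τ - (u + τ) = v - u by ring] at h
    refine h.trans ?_
    have hmono : (u + τ) ^ (-β) ≤ u ^ (-β) :=
      Real.rpow_le_rpow_of_nonpos hu (by linarith) (neg_nonpos.mpr hβ0)
    have hXnn : (0:ℝ) ≤ (v - u) ^ ρ := Real.rpow_nonneg (by linarith) ρ
    exact mul_le_mul_of_nonneg_right (mul_le_mul_of_nonneg_left hmono hc₂) hXnn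
  · -- Step 1: the identity for τ < s
    have key : ∀ s t : ℝ, τ < s → s ≤ t → t ≤ T →
        I t - S (t - s) (I s) = Iθ (t - τ) - S (t - s) (Iθ (s - τ)) := by
      intro s t hτs hst htT
      have h0s : 0 < s := lt_of_le_of_lt hτ0 hτs
      set E : ℝ → W := fun v =>
        (I v - S (v - s) (I s)) - (Iθ (v - τ) - S (v - s) (Iθ (s - τ))) with hE_def
      set M : ℝ := max CI 0 * c₂ * s ^ (-β) + max CIθ 0 * c₂ * (s - τ) ^ (-β) with hM_def
      have hM0 : 0 ≤ M := by
        apply add_nonneg <;>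
          exact mul_nonneg (mul_nonneg (le_max_right _ _) hc₂) (Real.rpow_nonneg (by linarith) _)
      have hEt : E t = 0 := by
        apply sewing_unique_aux T S hS0 hSadd cS' hcS'0 hS' ρ hρ E s t h0s.le hst htT
          (by simp [hE_def, sub_self, hS0]) M hM0
        intro m v hsm hmv hvt
        have h0m : 0 < m := lt_of_lt_of_le h0s hsm
        have hvT : v ≤ T := le_trans hvt htT
        have hco : ∀ x : W, S (v - s) x = S (v - m) (S (m - s) x) := by
          intro x
          rw [show v - s = (v - m) + (m - s) by ring, hSadd _ _ (by linarith) (by linarith)]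
          rfl
        have expand : E v - S (v - m) (E m)
            = (I v - S (v - m) (I m) - Ξ v m)
              - (Iθ (v - τ) - S (v - m) (Iθ (m - τ)) - Ξ v m) := by
          simp only [hE_def, map_sub]
          rw [hco (I s), hco (Iθ (s - τ))]
          abel
        rw [expand]
        have h1 := hIbd2 m v h0m hmv hvT
        have h2 := hIθbd2 (m - τ) (v - τ) (by linarith) (by linarith) (by linarith)
        rw [show v - τ - (m - τ) = v - m by ring, show v - τ + τ = v by ring,
          show m - τ + τ = m by ring] at h2
        have hXnn : (0:ℝ) ≤ (v - m) ^ ρ := Real.rpow_nonneg (by linarith) ρ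
        calc ‖(I v - S (v - m) (I m) - Ξ v m)
              - (Iθ (v - τ) - S (v - m) (Iθ (m - τ)) - Ξ v m)‖
            ≤ ‖I v - S (v - m) (I m) - Ξ v m‖
              + ‖Iθ (v - τ) - S (v - m) (Iθ (m - τ)) - Ξ v m‖ := norm_sub_le _ _
          _ ≤ CI * c₂ * m ^ (-β) * (v - m) ^ ρ
              + CIθ * c₂ * (m - τ) ^ (-β) * (v - m) ^ ρ := add_le_add h1 h2
          _ ≤ max CI 0 * c₂ * s ^ (-β) * (v - m) ^ ρ
              + max CIθ 0 * c₂ * (s - τ) ^ (-β) * (v - m) ^ ρ := by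
              have m1 : m ^ (-β) ≤ s ^ (-β) :=
                Real.rpow_le_rpow_of_nonpos h0s hsm (neg_nonpos.mpr hβ0)
              have m2 : (m - τ) ^ (-β) ≤ (s - τ) ^ (-β) :=
                Real.rpow_le_rpow_of_nonpos (by linarith) (by linarith)
                  (neg_nonpos.mpr hβ0)
              have e1 : CI * c₂ * m ^ (-β) ≤ max CI 0 * c₂ * s ^ (-β) := by
                calc CI * c₂ * m ^ (-β) ≤ max CI 0 * c₂ * m ^ (-β) :=
                      mul_le_mul_of_nonneg_right
                        (mul_le_mul_of_nonneg_right (le_max_left _ _) hc₂)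
                        (Real.rpow_nonneg h0m.le _)
                  _ ≤ max CI 0 * c₂ * s ^ (-β) :=
                      mul_le_mul_of_nonneg_left m1
                        (mul_nonneg (le_max_right _ _) hc₂)
              have e2 : CIθ * c₂ * (m - τ) ^ (-β) ≤ max CIθ 0 * c₂ * (s - τ) ^ (-β) := by
                calc CIθ * c₂ * (m - τ) ^ (-β) ≤ max CIθ 0 * c₂ * (m - τ) ^ (-β) :=
                      mul_le_mul_of_nonneg_right
                        (mul_le_mul_of_nonneg_right (le_max_left _ _) hc₂)
                        (Real.rpow_nonneg (by linarith) _)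
                  _ ≤ max CIθ 0 * c₂ * (s - τ) ^ (-β) :=
                      mul_le_mul_of_nonneg_left m2
                        (mul_nonneg (le_max_right _ _) hc₂)
              exact add_le_add (mul_le_mul_of_nonneg_right e1 hXnn)
                (mul_le_mul_of_nonneg_right e2 hXnn)
          _ = M * (v - m) ^ ρ := by rw [hM_def]; ring
      have h := hEt
      simp only [hE_def] at h
      exact sub_eq_zero.mp h
    intro s t hτs hst htT
    rcases hτs.eq_or_lt with heq | hlt
    · -- s = τ
      subst heq
      rcases hst.eq_or_lt with heq2 | hlt2
      · subst heq2; simp [sub_self, hS0]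
      · rcases hτ0.eq_or_lt with heq0 | hτpos
        · -- τ = 0
          subst heq0
          simp only [sub_zero, hI0, hIθ0, map_zero]
          haveI hNB : (𝓝[Set.Ioc (0:ℝ) t] 0).NeBot := by
            apply mem_closure_iff_nhdsWithin_neBot.mp
            rw [closure_Ioc (ne_of_lt hlt2)]
            exact ⟨le_rfl, hlt2.le⟩
          have hIat : ContinuousWithinAt I (Set.Ioc (0:ℝ) t) 0 :=
            (hIcont 0 ⟨le_rfl, hT.le⟩).mono
              (fun x hx => ⟨hx.1.le, hx.2.trans htT⟩)
          have hIθat : ContinuousWithinAt Iθ (Set.Ioc (0:ℝ) t) 0 :=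
            (hIθcont 0 ⟨le_rfl, by linarith⟩).mono
              (fun x hx => ⟨hx.1.le, by simp only [sub_zero]; linarith [hx.2]⟩)
          have htend : Tendsto (fun s' => cS' * ‖I s' - Iθ s'‖) (𝓝[Set.Ioc (0:ℝ) t] 0)
              (𝓝 (cS' * ‖I 0 - Iθ 0‖)) :=
            ((hIat.sub hIθat).norm).const_mul _
          rw [hI0, hIθ0, sub_zero, norm_zero, mul_zero] at htend
          have hle : ‖I t - Iθ t‖ ≤ 0 := by
            apply ge_of_tendsto htend
            filter_upwards [self_mem_nhdsWithin] with s' hs'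
            obtain ⟨h1, h2⟩ := hs'
            have hk := key s' t h1 h2 htT
            simp only [sub_zero] at hk
            have hid : I t - Iθ t = S (t - s') (I s') - S (t - s') (Iθ s') :=
              sub_eq_sub_iff_sub_eq_sub.mp hk
            rw [hid, ← map_sub]
            calc ‖S (t - s') (I s' - Iθ s')‖ ≤ ‖S (t - s')‖ * ‖I s' - Iθ s'‖ :=
                (S (t - s')).le_opNorm _
              _ ≤ cS' * ‖I s' - Iθ s'‖ :=
                mul_le_mul_of_nonneg_right (hS' _ (by linarith) (by linarith))
                  (norm_nonneg _)
          rw [← sub_eq_zero]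
          exact norm_le_zero_iff.mp hle
        · -- 0 < τ
          rw [sub_self, hIθ0, map_zero, sub_zero, ← sub_eq_zero]
          haveI hNB : (𝓝[Set.Ioc τ t] τ).NeBot := by
            apply mem_closure_iff_nhdsWithin_neBot.mp
            rw [closure_Ioc (ne_of_lt hlt2)]
            exact ⟨le_rfl, hlt2.le⟩
          -- Ξ τ τ = 0
          have hΞττ : Ξ τ τ = 0 := by
            have h := hΞ2 τ τ τ hτpos le_rfl le_rfl hτT
            rw [show τ - τ = (0:ℝ) by ring, hS0] at h
            simp only [ContinuousLinearMap.coe_id', id_eq, sub_self, zero_sub, norm_neg] at h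
            rw [Real.zero_rpow (by linarith : ρ ≠ 0), mul_zero] at h
            exact norm_le_zero_iff.mp h
          -- the three tendsto components
          have c1 : Tendsto (fun s' : ℝ => CI * c₂ * τ ^ (-β) * (s' - τ) ^ ρ)
              (𝓝[Set.Ioc τ t] τ) (𝓝 0) := by
            have hb : ContinuousWithinAt (fun s' : ℝ => (s' - τ) ^ ρ) (Set.Ioc τ t) τ :=
              ((continuous_id.sub continuous_const).continuousWithinAt).rpow_const
                (Or.inr (by linarith))
            have := hb.const_mul (CI * c₂ * τ ^ (-β))
            have hval : (fun s' : ℝ => CI * c₂ * τ ^ (-β) * (s' - τ) ^ ρ) τ = 0 := by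
              simp [Real.zero_rpow (by linarith : ρ ≠ 0)]
            simpa [hval, Real.zero_rpow (by linarith : ρ ≠ 0)] using this.tendsto
          have c2 : Tendsto (fun s' : ℝ => ‖Ξ s' τ‖) (𝓝[Set.Ioc τ t] τ) (𝓝 0) := by
            have hmem : ((τ, τ) : ℝ × ℝ) ∈ {p : ℝ × ℝ | 0 ≤ p.2 ∧ p.2 ≤ p.1 ∧ p.1 ≤ T} :=
              ⟨hτ0, le_rfl, hτT⟩
            have h1 : ContinuousWithinAt (fun p : ℝ × ℝ => Ξ p.1 p.2)
                {p : ℝ × ℝ | 0 ≤ p.2 ∧ p.2 ≤ p.1 ∧ p.1 ≤ T} (τ, τ) := hΞcont _ hmem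
            have h2 : ContinuousWithinAt (fun s' : ℝ => ((s', τ) : ℝ × ℝ))
                (Set.Ioc τ t) τ :=
              (continuous_id.prodMk continuous_const).continuousWithinAt
            have hmaps : Set.MapsTo (fun s' : ℝ => ((s', τ) : ℝ × ℝ)) (Set.Ioc τ t)
                {p : ℝ × ℝ | 0 ≤ p.2 ∧ p.2 ≤ p.1 ∧ p.1 ≤ T} :=
              fun x hx => ⟨hτ0, hx.1.le, hx.2.trans htT⟩
            have h3 : ContinuousWithinAt (fun s' : ℝ => Ξ s' τ) (Set.Ioc τ t) τ :=
              ContinuousWithinAt.comp (f := fun s' : ℝ => ((s', τ) : ℝ × ℝ)) h1 h2 hmaps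
            have h5 : Tendsto (fun s' : ℝ => ‖Ξ s' τ‖) (𝓝[Set.Ioc τ t] τ)
                (𝓝 ‖Ξ τ τ‖) := h3.norm
            rwa [hΞττ, norm_zero] at h5
          have c3 : Tendsto (fun s' : ℝ => ‖Iθ (s' - τ)‖) (𝓝[Set.Ioc τ t] τ) (𝓝 0) := by
            have hIθ0' : ContinuousWithinAt Iθ (Set.Icc 0 (T - τ)) (τ - τ) := by
              rw [sub_self]
              exact hIθcont 0 ⟨le_rfl, by linarith⟩
            have hsub : ContinuousWithinAt (fun s' : ℝ => s' - τ) (Set.Ioc τ t) τ :=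
              (continuous_id.sub continuous_const).continuousWithinAt
            have hmaps : Set.MapsTo (fun s' : ℝ => s' - τ) (Set.Ioc τ t)
                (Set.Icc 0 (T - τ)) :=
              fun x hx => by
                simp only [Set.mem_Icc]
                exact ⟨by linarith [hx.1], by linarith [hx.2]⟩
            have h3 : ContinuousWithinAt (fun s' : ℝ => Iθ (s' - τ)) (Set.Ioc τ t) τ :=
              ContinuousWithinAt.comp (f := fun s' : ℝ => s' - τ) hIθ0' hsub hmaps
            have h5 : Tendsto (fun s' : ℝ => ‖Iθ (s' - τ)‖) (𝓝[Set.Ioc τ t] τ)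
                (𝓝 ‖Iθ (τ - τ)‖) := h3.norm
            rwa [sub_self, hIθ0, norm_zero] at h5
          have htends : Tendsto
              (fun s' : ℝ => cS' * (CI * c₂ * τ ^ (-β) * (s' - τ) ^ ρ + ‖Ξ s' τ‖
                + ‖Iθ (s' - τ)‖)) (𝓝[Set.Ioc τ t] τ) (𝓝 0) := by
            have := ((c1.add c2).add c3).const_mul cS'
            simpa using this
          have hle : ‖I t - S (t - τ) (I τ) - Iθ (t - τ)‖ ≤ 0 := by
            apply ge_of_tendsto htends
            filter_upwards [self_mem_nhdsWithin] with s' hs'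
            obtain ⟨h1, h2⟩ := hs'
            have hk := key s' t h1 h2 htT
            have hcomp : ∀ x : W, S (t - τ) x = S (t - s') (S (s' - τ) x) := by
              intro x
              rw [show t - τ = (t - s') + (s' - τ) by ring,
                hSadd _ _ (by linarith) (by linarith)]
              rfl
            have hid : I t - S (t - τ) (I τ) - Iθ (t - τ)
                = S (t - s') (I s' - S (s' - τ) (I τ) - Iθ (s' - τ)) := by
              have h := sub_eq_sub_iff_sub_eq_sub.mp hk
              -- h : I t - Iθ (t - τ) = S (t - s') (I s') - S (t - s') (Iθ (s' - τ))
              simp only [map_sub]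
              rw [← hcomp (I τ)]
              rw [sub_right_comm, h]
              abel
            rw [hid]
            have hinner : ‖I s' - S (s' - τ) (I τ) - Iθ (s' - τ)‖
                ≤ CI * c₂ * τ ^ (-β) * (s' - τ) ^ ρ + ‖Ξ s' τ‖ + ‖Iθ (s' - τ)‖ := by
              have hbd := hIbd2 τ s' hτpos h1.le (h2.trans htT)
              calc ‖I s' - S (s' - τ) (I τ) - Iθ (s' - τ)‖
                  = ‖((I s' - S (s' - τ) (I τ) - Ξ s' τ) + Ξ s' τ) - Iθ (s' - τ)‖ := by
                    congr 1; abel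
                _ ≤ ‖(I s' - S (s' - τ) (I τ) - Ξ s' τ) + Ξ s' τ‖ + ‖Iθ (s' - τ)‖ :=
                    norm_sub_le _ _
                _ ≤ (‖I s' - S (s' - τ) (I τ) - Ξ s' τ‖ + ‖Ξ s' τ‖) + ‖Iθ (s' - τ)‖ :=
                    add_le_add (norm_add_le _ _) le_rfl
                _ ≤ CI * c₂ * τ ^ (-β) * (s' - τ) ^ ρ + ‖Ξ s' τ‖ + ‖Iθ (s' - τ)‖ := by
                    linarith [hbd]
            calc ‖S (t - s') (I s' - S (s' - τ) (I τ) - Iθ (s' - τ))‖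
                ≤ ‖S (t - s')‖ * ‖I s' - S (s' - τ) (I τ) - Iθ (s' - τ)‖ :=
                  (S (t - s')).le_opNorm _
              _ ≤ cS' * (CI * c₂ * τ ^ (-β) * (s' - τ) ^ ρ + ‖Ξ s' τ‖ + ‖Iθ (s' - τ)‖) :=
                  mul_le_mul (hS' _ (by linarith) (by linarith)) hinner
                    (norm_nonneg _) hcS'0
          exact norm_le_zero_iff.mp hle
    · exact key s t hlt hst htT
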